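/- arXiv:math/0411237 — 5 statements merged into one kernel-verified Lean document; each statement's English description precedes it below -/
import Mathlib

section
/- Every 𝔞-invariant asymptotically abelian state φ of 𝔅 is even, i.e., φ ∘ 𝔰 = φ (equivalently, φ vanishes on the odd part 𝔅_−). -/
open Filter MeasureTheory Topology
open scoped ComplexOrder

/-- The box `Λ_N = {0, …, N−1}^d ⊂ ℤ^d`. -/
noncomputable def box (d N : ℕ) : Finset (Fin d → ℤ) := Finset.Icc 0 (fun _ => (N : ℤ) - 1)

/-- A state on a unital C*-algebra: a positive unital continuous linear functional. -/
def IsState {F : Type*} [NormedRing F] [StarRing F] [NormedAlgebra ℂ F]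
    (φ : F →L[ℂ] ℂ) : Prop :=
  φ 1 = 1 ∧ ∀ A, 0 ≤ φ (star A * A)

/-- A bounded measurable (`L^∞`) complex-valued function. -/
def IsBddMeasurable {X : Type*} [MeasurableSpace X] (f : X → ℂ) : Prop :=
  Measurable f ∧ ∃ C, ∀ ξ, ‖f ξ‖ ≤ C

/-- A measurable field of states. -/
def IsStateField {X F : Type*} [MeasurableSpace X] [NormedRing F] [StarRing F]
    [NormedAlgebra ℂ F] (φ : X → F →L[ℂ] ℂ) : Prop :=
  (∀ ξ, IsState (φ ξ)) ∧ ∀ A, Measurable fun ξ => φ ξ A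

/-- Equivariance (for a.e. ξ) of a field of states w.r.t. the spatial translations. -/
def Equivariant {X F : Type*} [MeasurableSpace X] [NormedRing F] [NormedAlgebra ℂ F]
    {d : ℕ} (ν : Measure X) (T : (Fin d → ℤ) → X → X) (α : (Fin d → ℤ) → F → F)
    (φ : X → F →L[ℂ] ℂ) : Prop :=
  ∀ᵐ ξ ∂ν, ∀ (x : Fin d → ℤ) (A : F), φ ξ (α x A) = φ (T (-x) ξ) A

/-- A measure-preserving ergodic action of `ℤ^d` on `(X, ν)`. -/
def ErgodicAction {X : Type*} [MeasurableSpace X] {d : ℕ} (ν : Measure X)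
    (T : (Fin d → ℤ) → X → X) : Prop :=
  (∀ x, MeasurePreserving (T x) ν ν) ∧ T 0 = id ∧ (∀ x y, T (x + y) = T x ∘ T y) ∧
    ∀ S : Set X, MeasurableSet S → (∀ x, T x ⁻¹' S = S) → ν S = 0 ∨ ν S = 1

/-- Weak clustering of a field of states w.r.t. the spatial translations. -/
def WeaklyClustering {X F : Type*} [MeasurableSpace X] [NormedRing F] [NormedAlgebra ℂ F]
    (d : ℕ) (ν : Measure X) (T : (Fin d → ℤ) → X → X) (α : (Fin d → ℤ) → F → F)
    (φ : X → F →L[ℂ] ℂ) : Prop :=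
  ∀ (A B : F) (f g : X → ℂ), IsBddMeasurable f → IsBddMeasurable g →
    Tendsto (fun N : ℕ => ((N : ℂ) ^ d)⁻¹ *
        ∑ x ∈ box d N, ∫ ξ, f ξ * g (T (-x) ξ) * φ ξ (A * α x B) ∂ν)
      atTop (nhds ((∫ ξ, f ξ * φ ξ A ∂ν) * (∫ ξ, g ξ * φ ξ B ∂ν)))

/-- Asymptotic abelianness of a field of states, w.r.t. a grading `σ`
(with `ε_{A,B} = −1` iff both `A`, `B` are odd, encoded by the two clauses). -/
def AsympAbelian {X F : Type*} [MeasurableSpace X] [NormedRing F] [NormedAlgebra ℂ F]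
    (d : ℕ) (ν : Measure X) (T : (Fin d → ℤ) → X → X) (α : (Fin d → ℤ) → F → F)
    (σ : F → F) (φ : X → F →L[ℂ] ℂ) : Prop :=
  ∀ A B : F, (σ A = A ∨ σ A = -A) → (σ B = B ∨ σ B = -B) → ∀ C D : F,
    ∀ f g h k : X → ℂ, IsBddMeasurable f → IsBddMeasurable g → IsBddMeasurable h →
      IsBddMeasurable k →
      (¬(σ A = -A ∧ σ B = -B) →
        Tendsto (fun x : Fin d → ℤ =>
            ∫ ξ, h ξ * f (T (-x) ξ) * g ξ * k ξ * φ ξ (C * (α x A * B - B * α x A) * D) ∂ν)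
          cofinite (nhds 0)) ∧
      ((σ A = -A ∧ σ B = -B) →
        Tendsto (fun x : Fin d → ℤ =>
            ∫ ξ, h ξ * f (T (-x) ξ) * g ξ * k ξ * φ ξ (C * (α x A * B + B * α x A) * D) ∂ν)
          cofinite (nhds 0))

/-- The β-KMS condition for a state `ψ` w.r.t. a one-parameter family `θ` of maps. -/
def IsKMS {F : Type*} [NormedRing F] [StarRing F] [NormedAlgebra ℂ F] (β : ℝ)
    (θ : ℝ → F → F) (ψ : F →L[ℂ] ℂ) : Prop :=
  ∀ A B : F, ∃ Φ : ℂ → ℂ,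
    ContinuousOn Φ {z : ℂ | z.im ∈ Set.Icc (min 0 β) (max 0 β)} ∧
    (∃ C, ∀ z ∈ {z : ℂ | z.im ∈ Set.Icc (min 0 β) (max 0 β)}, ‖Φ z‖ ≤ C) ∧
    (∀ z ∈ {z : ℂ | z.im ∈ Set.Ioo (min 0 β) (max 0 β)}, DifferentiableAt ℂ Φ z) ∧
    (∀ t : ℝ, Φ t = ψ (A * θ t B)) ∧
    (∀ t : ℝ, Φ (t + Complex.I * β) = ψ (θ t B * A))

/-- The field `{φ_ξ}` restricts to a β-KMS state on the set `Obs` of observables. -/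
def FieldKMS {X F : Type*} [MeasurableSpace X] [NormedRing F] [StarRing F]
    [NormedAlgebra ℂ F] (β : ℝ) (ν : Measure X) (τ : ℝ → X → F → F) (Obs : Set F)
    (φ : X → F →L[ℂ] ℂ) : Prop :=
  ∀ A ∈ Obs, ∀ B ∈ Obs, ∀ f : X → ℂ, IsBddMeasurable f →
    ∃ Φ : ℂ → ℂ,
      ContinuousOn Φ {z : ℂ | z.im ∈ Set.Icc (min 0 β) (max 0 β)} ∧
      (∃ C, ∀ z ∈ {z : ℂ | z.im ∈ Set.Icc (min 0 β) (max 0 β)}, ‖Φ z‖ ≤ C) ∧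
      (∀ z ∈ {z : ℂ | z.im ∈ Set.Ioo (min 0 β) (max 0 β)}, DifferentiableAt ℂ Φ z) ∧
      (∀ t : ℝ, Φ t = ∫ ξ, f ξ * φ ξ (A * τ t ξ B) ∂ν) ∧
      (∀ t : ℝ, Φ (t + Complex.I * β) = ∫ ξ, f ξ * φ ξ (τ t ξ B * A) ∂ν)

/-- Every `𝔞`-invariant asymptotically abelian state `φ` of `𝔅` is even,
i.e. `φ ∘ 𝔰 = φ`. -/
theorem statement1 {d : ℕ} (hd : 1 ≤ d)
    {B : Type*} [NormedRing B] [StarRing B] [CStarRing B] [NormedAlgebra ℂ B]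
    [StarModule ℂ B] [CompleteSpace B]
    (a : (Fin d → ℤ) → B ≃⋆ₐ[ℂ] B)
    (ha0 : ∀ A, a 0 A = A)
    (haadd : ∀ x y A, a (x + y) A = a x (a y A))
    (s : B ≃⋆ₐ[ℂ] B) (hs : ∀ A, s (s A) = A)
    (hsa : ∀ x A, s (a x A) = a x (s A))
    (φ : B →L[ℂ] ℂ) (hφ : IsState φ)
    (hinv : ∀ x A, φ (a x A) = φ A)
    (haa : ∀ A B' : B, (s A = A ∨ s A = -A) → (s B' = B' ∨ s B' = -B') → ∀ C D : B,
      (¬(s A = -A ∧ s B' = -B') →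
        Tendsto (fun x : Fin d → ℤ => φ (C * (a x A * B' - B' * a x A) * D))
          cofinite (nhds 0)) ∧
      ((s A = -A ∧ s B' = -B') →
        Tendsto (fun x : Fin d → ℤ => φ (C * (a x A * B' + B' * a x A) * D))
          cofinite (nhds 0))) :

    ∀ A : B, φ (s A) = φ A := by
  obtain ⟨hφ1, hφpos⟩ := hφ
  have hre : ∀ b : B, 0 ≤ (φ (star b * b)).re ∧ (φ (star b * b)).im = 0 := by
    intro b
    have := hφpos b
    rw [Complex.le_def] at this
    exact ⟨by simpa using this.1, by simpa using this.2.symm⟩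
  have expand : ∀ (c : ℂ) (b : B), φ (star (c • 1 + b) * (c • 1 + b)) =
      ((starRingEnd ℂ) c * c) * φ 1 + (starRingEnd ℂ) c * φ b + c * φ (star b)
        + φ (star b * b) := by
    intro c b
    have h : star (c • (1:B) + b) * (c • 1 + b) =
        ((starRingEnd ℂ) c * c) • (1:B) + (starRingEnd ℂ) c • b + c • star b + star b * b := by
      simp only [star_add, star_smul, star_one, add_mul, mul_add, smul_mul_smul_comm,
        mul_smul_comm, smul_mul_assoc, smul_smul, mul_one, one_mul, starRingEnd_apply]
      module
    rw [h]
    simp only [map_add, _root_.map_smul, smul_eq_mul]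
  have hherm : ∀ b : B, φ (star b) = (starRingEnd ℂ) (φ b) := by
    intro b
    have h1 := (hre ((1:ℂ) • 1 + b)).2
    have h2 := (hre (Complex.I • 1 + b)).2
    rw [expand] at h1 h2
    simp only [hφ1, map_one, one_mul, mul_one, Complex.add_im, Complex.mul_im,
      Complex.one_re, Complex.one_im, Complex.conj_re, Complex.conj_im, Complex.I_re,
      Complex.I_im, (hre b).2, Complex.conj_I, Complex.neg_re, Complex.neg_im] at h1 h2
    apply Complex.ext
    · simp only [Complex.conj_re]; linarith [h2]
    · simp only [Complex.conj_im]; linarith [h1]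
  have hCS : ∀ b : B, Complex.normSq (φ b) ≤ (φ (star b * b)).re := by
    intro b
    have h := (hre ((-(φ b)) • 1 + b)).1
    rw [expand, hherm b, hφ1] at h
    have e : (((starRingEnd ℂ) (-(φ b)) * (-(φ b))) * 1 + (starRingEnd ℂ) (-(φ b)) * φ b
        + (-(φ b)) * (starRingEnd ℂ) (φ b) + φ (star b * b))
        = φ (star b * b) - Complex.normSq (φ b) := by
      rw [Complex.normSq_eq_conj_mul_self]
      ring
    rw [e] at h
    simp only [Complex.sub_re, Complex.ofReal_re] at h
    linarith
  have hodd : ∀ A : B, s A = -A → φ A = 0 := by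
    intro A hA
    set A' : B := star A with hA'
    have hA'odd : s A' = -A' := by
      rw [hA', map_star, hA, star_neg]
    set G : (Fin d → ℤ) → ℂ := fun z => φ (a z A * A' + A' * a z A) with hGdef
    have hG : Tendsto G cofinite (nhds 0) := by
      have := (haa A A' (Or.inr hA) (Or.inr hA'odd) 1 1).2 ⟨hA, hA'odd⟩
      simpa [hGdef] using this
    have key : ∀ x y : Fin d → ℤ, φ (a x A' * a y A) + φ (a y A * a x A') = G (y - x) := by
      intro x y
      have hxy : x + (y - x) = y := by abel
      have hy : a y A = a x (a (y - x) A) := by rw [← haadd, hxy]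
      rw [hy, ← map_mul, ← map_mul, hinv, hinv]
      simp [hGdef]
      ring
    set b : ℕ → B := fun N => ∑ x ∈ box d N, a x A with hbdef
    have hcard : ∀ N, (box d N).card = N ^ d := by
      intro N; simp [box, Pi.card_Icc, Int.card_Icc]
    have hφb : ∀ N, φ (b N) = (N ^ d : ℂ) * φ A := by
      intro N
      rw [hbdef]
      simp only [map_sum, hinv]
      rw [Finset.sum_const, hcard, nsmul_eq_mul]
      push_cast; ring
    have hstarb : ∀ N, star (b N) = ∑ x ∈ box d N, a x A' := by
      intro N
      rw [hbdef, star_sum]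
      exact Finset.sum_congr rfl fun x _ => by rw [hA', map_star]
    have hsum : ∀ N, φ (star (b N) * b N) + φ (b N * star (b N)) =
        ∑ p ∈ box d N ×ˢ box d N, G (p.2 - p.1) := by
      intro N
      have e1 : φ (star (b N) * b N) = ∑ x ∈ box d N, ∑ y ∈ box d N, φ (a x A' * a y A) := by
        rw [hstarb, hbdef, Finset.sum_mul_sum]
        simp only [map_sum]
      have e2 : φ (b N * star (b N)) = ∑ x ∈ box d N, ∑ y ∈ box d N, φ (a y A * a x A') := by
        rw [hstarb, hbdef, Finset.sum_mul_sum]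
        simp only [map_sum]
        exact Finset.sum_comm
      rw [e1, e2, ← Finset.sum_add_distrib, Finset.sum_product]
      refine Finset.sum_congr rfl fun x _ => ?_
      rw [← Finset.sum_add_distrib]
      exact Finset.sum_congr rfl fun y _ => key x y
    have main : ∀ ε : ℝ, 0 < ε → Complex.normSq (φ A) ≤ ε := by
      intro ε hε
      have hε2 : 0 < ε / 2 := by linarith
      have hfin : {z : Fin d → ℤ | ¬ ‖G z‖ < ε / 2}.Finite := by
        have := hG.eventually (Metric.ball_mem_nhds 0 hε2)
        simpa [Filter.eventually_cofinite, Metric.mem_ball, dist_zero_right] using this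
      set F : Finset (Fin d → ℤ) := hfin.toFinset with hFdef
      set M : ℝ := ∑ z ∈ F, ‖G z‖ with hMdef
      have hM0 : 0 ≤ M := Finset.sum_nonneg fun z _ => norm_nonneg _
      have hterm : ∀ p : (Fin d → ℤ) × (Fin d → ℤ),
          ‖G (p.2 - p.1)‖ ≤ ε / 2 + (if p.2 - p.1 ∈ F then M else 0) := by
        intro p
        by_cases hp : p.2 - p.1 ∈ F
        · rw [if_pos hp]
          have : ‖G (p.2 - p.1)‖ ≤ M :=
            Finset.single_le_sum (f := fun z => ‖G z‖) (fun z _ => norm_nonneg _) hp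
          linarith
        · rw [if_neg hp]
          have : ‖G (p.2 - p.1)‖ < ε / 2 := by
            by_contra hc
            exact hp (hfin.mem_toFinset.mpr (fun h => hc (not_not.mp (by simpa using h))))
          linarith
      have hcount : ∀ N : ℕ, ((box d N ×ˢ box d N).filter (fun p => p.2 - p.1 ∈ F)).card
          ≤ F.card * N ^ d := by
        intro N
        have h := Finset.card_le_card_of_injOn
          (fun p : (Fin d → ℤ) × (Fin d → ℤ) => (p.2 - p.1, p.1))
          (s := (box d N ×ˢ box d N).filter (fun p => p.2 - p.1 ∈ F)) (t := F ×ˢ box d N)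
          (by
            intro p hp
            simp only [Finset.mem_coe, Finset.mem_filter, Finset.mem_product] at hp ⊢
            exact ⟨hp.2, hp.1.1⟩)
          (by
            intro p hp q hq hpq
            simp only [Prod.ext_iff] at hpq
            have h1 : p.1 = q.1 := hpq.2
            have h2 : p.2 = q.2 := by
              have := hpq.1; rw [h1] at this; exact sub_left_injective this
            exact Prod.ext h1 h2)
        calc _ ≤ (F ×ˢ box d N).card := h
          _ = F.card * N ^ d := by rw [Finset.card_product, hcard]
      have hNbd : ∀ N : ℕ, (N:ℝ) ^ d * (N:ℝ) ^ d * Complex.normSq (φ A)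
          ≤ (N:ℝ) ^ d * (N:ℝ) ^ d * (ε/2) + (M * F.card) * (N:ℝ)^d := by
        intro N
        have h1 : Complex.normSq (φ (b N)) ≤ (φ (star (b N) * b N)).re := hCS (b N)
        have h2 : (φ (star (b N) * b N)).re
            ≤ (φ (star (b N) * b N) + φ (b N * star (b N))).re := by
          rw [Complex.add_re]
          have := (hre (star (b N))).1
          rw [star_star] at this
          linarith
        have h3 : (φ (star (b N) * b N) + φ (b N * star (b N))).re
            ≤ ‖∑ p ∈ box d N ×ˢ box d N, G (p.2 - p.1)‖ := by
          rw [hsum N]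
          exact Complex.re_le_norm _
        have h4 : ‖∑ p ∈ box d N ×ˢ box d N, G (p.2 - p.1)‖
            ≤ ∑ p ∈ box d N ×ˢ box d N, ‖G (p.2 - p.1)‖ := norm_sum_le _ _
        have h5 : ∑ p ∈ box d N ×ˢ box d N, ‖G (p.2 - p.1)‖
            ≤ (N:ℝ) ^ d * (N:ℝ) ^ d * (ε/2) + (M * F.card) * (N:ℝ)^d := by
          calc ∑ p ∈ box d N ×ˢ box d N, ‖G (p.2 - p.1)‖
              ≤ ∑ p ∈ box d N ×ˢ box d N, (ε / 2 + (if p.2 - p.1 ∈ F then M else 0)) :=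
                Finset.sum_le_sum fun p _ => hterm p
            _ = (box d N ×ˢ box d N).card * (ε/2)
                + ((box d N ×ˢ box d N).filter (fun p => p.2 - p.1 ∈ F)).card * M := by
                rw [Finset.sum_add_distrib, Finset.sum_const, ← Finset.sum_filter,
                  Finset.sum_const, nsmul_eq_mul, nsmul_eq_mul]
            _ ≤ (N:ℝ) ^ d * (N:ℝ) ^ d * (ε/2) + (M * F.card) * (N:ℝ)^d := by
                have hc1 : ((box d N ×ˢ box d N).card : ℝ) = (N:ℝ)^d * (N:ℝ)^d := by
                  rw [Finset.card_product, hcard]; push_cast; ring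
                have hc2 := hcount N
                have : (((box d N ×ˢ box d N).filter (fun p => p.2 - p.1 ∈ F)).card : ℝ)
                    ≤ (F.card : ℝ) * (N:ℝ)^d := by exact_mod_cast hc2
                rw [hc1]
                nlinarith [hM0]
        have hnormsq : Complex.normSq (φ (b N))
            = (N:ℝ)^d * (N:ℝ)^d * Complex.normSq (φ A) := by
          rw [hφb N, Complex.normSq_mul]
          have : ((N:ℂ))^d = ((N^d : ℕ) : ℂ) := by push_cast; ring
          rw [this, Complex.normSq_natCast]
          push_cast; ring
        linarith [hnormsq ▸ h1]
      obtain ⟨N, hN1, hN2⟩ : ∃ N : ℕ, 1 ≤ N ∧ M * F.card ≤ (ε/2) * (N:ℝ)^d := by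
        refine ⟨max 1 ⌈(M * F.card) / (ε/2)⌉₊, le_max_left _ _, ?_⟩
        have h1 : (M * F.card) / (ε/2) ≤ (⌈(M * F.card) / (ε/2)⌉₊ : ℝ) := Nat.le_ceil _
        have h2 : (⌈(M * F.card) / (ε/2)⌉₊ : ℝ)
            ≤ ((max 1 ⌈(M * F.card) / (ε/2)⌉₊ : ℕ) : ℝ) := by
          exact_mod_cast le_max_right _ _
        have h3 : ((max 1 ⌈(M * F.card) / (ε/2)⌉₊ : ℕ) : ℝ)
            ≤ ((max 1 ⌈(M * F.card) / (ε/2)⌉₊ : ℕ) : ℝ) ^ d := by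
          apply le_self_pow₀
          · exact_mod_cast le_max_left 1 _
          · omega
        rw [div_le_iff₀ hε2] at h1
        calc M * F.card ≤ ε/2 * ((⌈(M * F.card) / (ε/2)⌉₊:ℕ):ℝ) := by linarith
          _ ≤ _ := by
              apply mul_le_mul_of_nonneg_left _ (le_of_lt hε2)
              exact le_trans h2 h3
      have hNpos : (0:ℝ) < (N:ℝ)^d := by positivity
      have hbd := hNbd N
      have hfinal : (N:ℝ)^d * (N:ℝ)^d * Complex.normSq (φ A)
          ≤ (N:ℝ)^d * (N:ℝ)^d * ε := by
        calc (N:ℝ)^d * (N:ℝ)^d * Complex.normSq (φ A)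
            ≤ (N:ℝ)^d * (N:ℝ)^d * (ε/2) + (M * F.card) * (N:ℝ)^d := hbd
          _ ≤ (N:ℝ)^d * (N:ℝ)^d * (ε/2) + ((ε/2) * (N:ℝ)^d) * (N:ℝ)^d := by nlinarith
          _ = (N:ℝ)^d * (N:ℝ)^d * ε := by ring
      exact le_of_mul_le_mul_left
        (by linarith [hfinal] :
          ((N:ℝ)^d * (N:ℝ)^d) * Complex.normSq (φ A) ≤ ((N:ℝ)^d * (N:ℝ)^d) * ε)
        (by positivity)
    have h0 : Complex.normSq (φ A) ≤ 0 := by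
      by_contra hc
      push_neg at hc
      have := main (Complex.normSq (φ A) / 2) (by linarith)
      linarith
    exact Complex.normSq_eq_zero.mp (le_antisymm h0 (Complex.normSq_nonneg _))
  intro A
  set Am : B := (2⁻¹ : ℂ) • (A - s A) with hAm
  have hAmodd : s Am = -Am := by
    rw [hAm, _root_.map_smul, map_sub, hs, ← smul_neg]
    congr 1
    abel
  have hφAm : φ Am = 0 := hodd Am hAmodd
  have h2Am : A - s A = (2 : ℂ) • Am := by
    rw [hAm, smul_smul]
    norm_num
  have : φ A - φ (s A) = 0 := by
    rw [← map_sub, h2Am, _root_.map_smul, hφAm, smul_zero]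
  exact (sub_eq_zero.mp this).symm
end

section
/- Let {φ_ξ}_{ξ∈X} be an equivariant measurable field of states on F, with the equivariance φ_ξ ∘ α_x = φ_{T_{−x}ξ} holding for all ξ ∈ X and x ∈ ℤ^d. For any closed subset V ⊆ G, the set X_V := {ξ ∈ X : there exists g ∈ V with φ_ξ ∘ γ_g = φ_ξ} is measurable with respect to the completion of ν, and ν(X_V) ∈ {0, 1}. -/
open Filter MeasureTheory Topology
open scoped ComplexOrder

/-- For an (everywhere) equivariant measurable field of states `{φ_ξ}` and a
closed set `V ⊆ G`, the set `X_V = {ξ : ∃ g ∈ V, φ_ξ ∘ γ_g = φ_ξ}` is measurable w.r.t.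
the completion of ν (null-measurable) and has measure 0 or 1. -/
theorem statement9 {d : ℕ} (hd : 1 ≤ d)
    {X : Type*} [TopologicalSpace X] [CompactSpace X] [TopologicalSpace.MetrizableSpace X]
    [MeasurableSpace X] [BorelSpace X]
    (ν : Measure X) [IsProbabilityMeasure ν]
    {F : Type*} [NormedRing F] [StarRing F] [CStarRing F] [NormedAlgebra ℂ F]
    [StarModule ℂ F] [CompleteSpace F] [TopologicalSpace.SeparableSpace F]
    (T : (Fin d → ℤ) → X → X) (hT : ErgodicAction ν T)
    (α : (Fin d → ℤ) → F ≃⋆ₐ[ℂ] F)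
    (hα0 : ∀ A, α 0 A = A) (hαadd : ∀ x y A, α (x + y) A = α x (α y A))
    {G : Type*} [Group G] [TopologicalSpace G] [IsTopologicalGroup G] [CompactSpace G]
    [TopologicalSpace.MetrizableSpace G]
    (γ : G → F ≃⋆ₐ[ℂ] F)
    (hγ1 : ∀ A, γ 1 A = A) (hγmul : ∀ g h A, γ (g * h) A = γ g (γ h A))
    (hγcont : Continuous fun p : G × F => γ p.1 p.2)
    (hγα : ∀ g x A, γ g (α x A) = α x (γ g A))
    (φ : X → F →L[ℂ] ℂ) (hφ : IsStateField φ)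
    (hequiv : ∀ (ξ : X) (x : Fin d → ℤ) (A : F), φ ξ (α x A) = φ (T (-x) ξ) A)
    (V : Set G) (hV : IsClosed V)
    (XV : Set X)
    (hXV : XV = {ξ : X | ∃ g ∈ V, ∀ A : F, φ ξ (γ g A) = φ ξ A}) :
    NullMeasurableSet XV ν ∧ (ν XV = 0 ∨ ν XV = 1) := by
  
  -- invariance
  have hαinv : ∀ (x : Fin d → ℤ) (B : F), α (-x) (α x B) = B := by
    intro x B; rw [← hαadd, neg_add_cancel, hα0]
  have hkey : ∀ (ξ : X) (x : Fin d → ℤ) (A : F), φ (T x ξ) A = φ ξ (α (-x) A) := by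
    intro ξ x A
    have := hequiv ξ (-x) A; rw [neg_neg] at this; exact this.symm
  have hTinv : ∀ x, T x ⁻¹' XV = XV := by
    intro x; ext ξ
    simp only [hXV, Set.mem_preimage, Set.mem_setOf_eq]
    constructor
    · rintro ⟨g, hg, hA⟩
      refine ⟨g, hg, fun B => ?_⟩
      have h1 := hA (α x B)
      rw [hkey, hkey, hγα, hαinv, hαinv] at h1
      exact h1
    · rintro ⟨g, hg, hA⟩
      refine ⟨g, hg, fun A => ?_⟩
      rw [hkey, hkey, ← hγα, hA]
  -- measurability
  rcases V.eq_empty_or_nonempty with hVe | hVne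
  · have : XV = ∅ := by
      rw [hXV, hVe]; simp
    rw [this]
    exact ⟨MeasurableSet.empty.nullMeasurableSet, Or.inl measure_empty⟩
  have hXVmeas : MeasurableSet XV := by
    letI : MetricSpace G := TopologicalSpace.metrizableSpaceMetric G
    obtain ⟨u, hu⟩ := TopologicalSpace.exists_dense_seq F
    haveI : Nonempty V := hVne.to_subtype
    obtain ⟨w, hw⟩ := TopologicalSpace.exists_dense_seq V
    -- the function h
    set e : X → G → ℕ → ℝ := fun ξ g n => min 1 ‖φ ξ (γ g (u n)) - φ ξ (u n)‖ with he
    have he0 : ∀ ξ g n, 0 ≤ e ξ g n := fun ξ g n => le_min zero_le_one (norm_nonneg _)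
    have he1 : ∀ ξ g n, e ξ g n ≤ 1 := fun ξ g n => min_le_left _ _
    set h : X → G → ℝ := fun ξ g => ∑' n, (2⁻¹ : ℝ) ^ n * e ξ g n with hh
    have hgeo : Summable fun n : ℕ => (2⁻¹ : ℝ) ^ n :=
      summable_geometric_of_lt_one (by norm_num) (by norm_num)
    have hsum : ∀ ξ g, Summable fun n => (2⁻¹ : ℝ) ^ n * e ξ g n := by
      intro ξ g
      refine Summable.of_nonneg_of_le (fun n => mul_nonneg (by positivity) (he0 ξ g n))
        (fun n => ?_) hgeo
      calc (2⁻¹ : ℝ) ^ n * e ξ g n ≤ (2⁻¹ : ℝ) ^ n * 1 := by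
            exact mul_le_mul_of_nonneg_left (he1 ξ g n) (by positivity)
        _ = (2⁻¹ : ℝ) ^ n := mul_one _
    have hhnn : ∀ ξ g, 0 ≤ h ξ g := fun ξ g =>
      tsum_nonneg fun n => mul_nonneg (by positivity) (he0 ξ g n)
    have hγgcont : ∀ g : G, Continuous fun A : F => γ g A := fun g =>
      hγcont.comp (continuous_const.prodMk continuous_id)
    have hcont : ∀ ξ, Continuous (h ξ) := by
      intro ξ
      refine continuous_tsum (fun n => ?_) hgeo (fun n g => ?_)
      · refine continuous_const.mul (Continuous.min continuous_const ?_)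
        exact ((((φ ξ).continuous.comp
          (hγcont.comp (continuous_id.prodMk continuous_const))).sub continuous_const)).norm
      · have : ‖(2⁻¹ : ℝ) ^ n * e ξ g n‖ = (2⁻¹ : ℝ) ^ n * e ξ g n := by
          rw [Real.norm_eq_abs, abs_of_nonneg (mul_nonneg (by positivity) (he0 ξ g n))]
        rw [this]
        calc (2⁻¹ : ℝ) ^ n * e ξ g n ≤ (2⁻¹ : ℝ) ^ n * 1 :=
              mul_le_mul_of_nonneg_left (he1 ξ g n) (by positivity)
          _ = (2⁻¹ : ℝ) ^ n := mul_one _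
    have hzero : ∀ ξ g, h ξ g = 0 ↔ ∀ A, φ ξ (γ g A) = φ ξ A := by
      intro ξ g
      constructor
      · intro h0
        have hterm : ∀ n, (2⁻¹ : ℝ) ^ n * e ξ g n = 0 := by
          intro n
          have h1 : (2⁻¹ : ℝ) ^ n * e ξ g n ≤ h ξ g :=
            Summable.le_tsum (hsum ξ g) n (fun j _ => mul_nonneg (by positivity) (he0 ξ g j))
          have h2 : 0 ≤ (2⁻¹ : ℝ) ^ n * e ξ g n := mul_nonneg (by positivity) (he0 ξ g n)
          linarith [h0 ▸ h1]
        have hen : ∀ n, φ ξ (γ g (u n)) = φ ξ (u n) := by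
          intro n
          have h1 : e ξ g n = 0 := by
            have := hterm n
            have h2 : (0:ℝ) < (2⁻¹ : ℝ) ^ n := by positivity
            exact (mul_eq_zero.mp this).resolve_left (ne_of_gt h2)
          have h3 : ‖φ ξ (γ g (u n)) - φ ξ (u n)‖ = 0 := by
            by_contra hne
            have h4 : 0 < ‖φ ξ (γ g (u n)) - φ ξ (u n)‖ :=
              lt_of_le_of_ne (norm_nonneg _) (Ne.symm hne)
            have : 0 < e ξ g n := lt_min one_pos h4
            linarith
          exact sub_eq_zero.mp (norm_eq_zero.mp h3)
        have hfeq : (fun A => φ ξ (γ g A)) = fun A => φ ξ A := by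
          refine Continuous.ext_on hu ?_ (φ ξ).continuous ?_
          · exact (φ ξ).continuous.comp (hγgcont g)
          · rintro A ⟨n, rfl⟩
            exact hen n
        exact fun A => congrFun hfeq A
      · intro hA
        have : ∀ n, (2⁻¹ : ℝ) ^ n * e ξ g n = 0 := by
          intro n
          simp [he, hA (u n)]
        simp only [hh, this, tsum_zero]
    -- measurable iInf
    set m : X → ENNReal := fun ξ => ⨅ i : ℕ, ENNReal.ofReal (h ξ (w i)) with hm
    have hmeas : Measurable m := by
      refine Measurable.iInf fun i => ?_
      have heq : (fun ξ => ENNReal.ofReal (h ξ (w i))) =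
          fun ξ => ∑' n, ENNReal.ofReal ((2⁻¹ : ℝ) ^ n * e ξ (w i) n) := by
        funext ξ
        exact ENNReal.ofReal_tsum_of_nonneg
          (fun n => mul_nonneg (by positivity) (he0 ξ _ n)) (hsum ξ _)
      rw [heq]
      refine Measurable.ennreal_tsum fun n => ?_
      refine ENNReal.measurable_ofReal.comp ?_
      exact (measurable_const.mul
        (Measurable.min measurable_const
          (((hφ.2 (γ (w i) (u n))).sub (hφ.2 (u n))).norm)))
    have hset : XV = m ⁻¹' {0} := by
      ext ξ
      simp only [hXV, Set.mem_setOf_eq, Set.mem_preimage, Set.mem_singleton_iff]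
      constructor
      · rintro ⟨g, hg, hA⟩
        have hg0 : h ξ g = 0 := (hzero ξ g).mpr hA
        show (⨅ i : ℕ, ENNReal.ofReal (h ξ ((w i) : G))) = 0
        rw [← ENNReal.bot_eq_zero, iInf_eq_bot]
        intro b hb
        obtain ⟨r, hr0, hr1, hr2⟩ := ENNReal.lt_iff_exists_real_btwn.mp hb
        have hrpos : 0 < r := by
          by_contra hr
          push_neg at hr
          rw [ENNReal.ofReal_eq_zero.mpr hr] at hr1
          exact lt_irrefl _ hr1
        -- find i with h ξ (w i) < r
        have hUopen : IsOpen {g' : G | h ξ g' < r} := isOpen_lt (hcont ξ) continuous_const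
        have hUopen' : IsOpen (Subtype.val ⁻¹' {g' : G | h ξ g' < r} : Set V) :=
          hUopen.preimage continuous_subtype_val
        have hne : (Subtype.val ⁻¹' {g' : G | h ξ g' < r} : Set V).Nonempty :=
          ⟨⟨g, hg⟩, by simp only [Set.mem_preimage, Set.mem_setOf_eq, hg0]; exact hrpos⟩
        obtain ⟨i, hi⟩ := hw.exists_mem_open hUopen' hne
        have hi' : h ξ ((w i) : G) < r := hi
        exact ⟨i, lt_trans ((ENNReal.ofReal_lt_ofReal_iff hrpos).mpr hi') hr2⟩
      · intro hm0
        have hVcomp : IsCompact V := hV.isCompact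
        obtain ⟨g₀, hg₀V, hg₀min⟩ :=
          hVcomp.exists_isMinOn hVne ((hcont ξ).continuousOn)
        have hle : ENNReal.ofReal (h ξ g₀) ≤ m ξ := by
          refine le_iInf fun i => ENNReal.ofReal_le_ofReal (hg₀min (w i).2)
        rw [hm0] at hle
        have : h ξ g₀ ≤ 0 := ENNReal.ofReal_eq_zero.mp (le_antisymm hle zero_le)
        exact ⟨g₀, hg₀V, (hzero ξ g₀).mp (le_antisymm this (hhnn ξ g₀))⟩
    rw [hset]
    exact hmeas (measurableSet_singleton 0)
  exact ⟨hXVmeas.nullMeasurableSet, hT.2.2.2 XV hXVmeas hTinv⟩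
end

section
/- Let {φ_ξ}_{ξ∈X} be an equivariant measurable field of states on F. Then there exist a closed subgroup G₁ ⊆ G and a ν-measurable set F₁ ⊆ X of full measure such that for every ξ ∈ F₁ the stabilizer G_{φ_ξ} := {g ∈ G : φ_ξ ∘ γ_g = φ_ξ} equals G₁; in particular, the stabilizer G_{φ_ξ} is ν-almost everywhere constant in ξ. -/
open Filter MeasureTheory Topology
open scoped ComplexOrder

/-- For an equivariant measurable field of states `{φ_ξ}`, the stabilizer
`G_{φ_ξ}` is ν-a.e. constant: there is a closed subgroup `G₁ ⊆ G` and a full-measure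
measurable set `F₁` with `G_{φ_ξ} = G₁` for every `ξ ∈ F₁`. -/
theorem statement10 {d : ℕ} (hd : 1 ≤ d)
    {X : Type*} [TopologicalSpace X] [CompactSpace X] [TopologicalSpace.MetrizableSpace X]
    [MeasurableSpace X] [BorelSpace X]
    (ν : Measure X) [IsProbabilityMeasure ν]
    {F : Type*} [NormedRing F] [StarRing F] [CStarRing F] [NormedAlgebra ℂ F]
    [StarModule ℂ F] [CompleteSpace F] [TopologicalSpace.SeparableSpace F]
    (T : (Fin d → ℤ) → X → X) (hT : ErgodicAction ν T)
    (α : (Fin d → ℤ) → F ≃⋆ₐ[ℂ] F)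
    (hα0 : ∀ A, α 0 A = A) (hαadd : ∀ x y A, α (x + y) A = α x (α y A))
    {G : Type*} [Group G] [TopologicalSpace G] [IsTopologicalGroup G] [CompactSpace G]
    [TopologicalSpace.MetrizableSpace G]
    (γ : G → F ≃⋆ₐ[ℂ] F)
    (hγ1 : ∀ A, γ 1 A = A) (hγmul : ∀ g h A, γ (g * h) A = γ g (γ h A))
    (hγcont : Continuous fun p : G × F => γ p.1 p.2)
    (hγα : ∀ g x A, γ g (α x A) = α x (γ g A))
    (φ : X → F →L[ℂ] ℂ) (hφ : IsStateField φ)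
    (hequiv : Equivariant ν T (fun x A => α x A) φ) :
    ∃ G₁ : Subgroup G, IsClosed (G₁ : Set G) ∧
      ∃ F₁ : Set X, MeasurableSet F₁ ∧ ν F₁ = 1 ∧
        ∀ ξ ∈ F₁, {g : G | ∀ A : F, φ ξ (γ g A) = φ ξ A} = (G₁ : Set G) := by
  classical
  letI : MetricSpace G := TopologicalSpace.metrizableSpaceMetric G
  haveI : Nonempty G := ⟨1⟩
  haveI : Nonempty F := ⟨1⟩
  -- dense sequences
  set A : ℕ → F := TopologicalSpace.denseSeq F with hAdef
  have hA : DenseRange A := TopologicalSpace.denseRange_denseSeq F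
  set u : ℕ → G := TopologicalSpace.denseSeq G with hudef
  have hu : DenseRange u := TopologicalSpace.denseRange_denseSeq G
  -- stabilizer
  set Stab : X → Set G := fun ξ => {g : G | ∀ B : F, φ ξ (γ g B) = φ ξ B} with hStabdef
  -- continuity helpers
  have hcontg : ∀ B : F, Continuous fun g : G => γ g B := fun B =>
    hγcont.comp (continuous_id.prodMk continuous_const)
  have contEval : ∀ (ξ : X) (B : F), Continuous fun g : G => φ ξ (γ g B) := fun ξ B =>
    (φ ξ).continuous.comp (hcontg B)
  have contB : ∀ (ξ : X) (g : G), Continuous fun B : F => φ ξ (γ g B) := fun ξ g =>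
    (φ ξ).continuous.comp (hγcont.comp (continuous_const.prodMk continuous_id))
  have hStabClosed : ∀ ξ, IsClosed (Stab ξ) := by
    intro ξ
    have : Stab ξ = ⋂ B : F, {g : G | φ ξ (γ g B) = φ ξ B} := by
      ext g; simp [hStabdef, Set.mem_iInter]
    rw [this]
    exact isClosed_iInter fun B => isClosed_eq (contEval ξ B) continuous_const
  have hStabDense : ∀ (ξ : X) (g : G), (∀ k : ℕ, φ ξ (γ g (A k)) = φ ξ (A k)) → g ∈ Stab ξ := by
    intro ξ g h
    have heq : (fun B : F => φ ξ (γ g B)) = fun B : F => φ ξ B := by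
      apply Continuous.ext_on hA (contB ξ g) (φ ξ).continuous
      rintro _ ⟨k, rfl⟩
      exact h k
    intro B
    exact congrFun heq B
  -- closed balls
  set K : ℕ → ℕ → Set G := fun m n => Metric.closedBall (u m) (1 / ((n : ℝ) + 1)) with hKdef
  have hKpos : ∀ n : ℕ, (0 : ℝ) < 1 / ((n : ℝ) + 1) := fun n => by positivity
  have hKcompact : ∀ m n, IsCompact (K m n) := fun m n =>
    Metric.isClosed_closedBall.isCompact
  -- dense sequences in the balls
  have hsep : ∀ m n : ℕ, ∃ e : ℕ → G, (∀ i, e i ∈ K m n) ∧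
      ∀ g ∈ K m n, ∀ ε > (0 : ℝ), ∃ i, dist g (e i) < ε := by
    intro m n
    haveI : Nonempty (K m n) := ⟨⟨u m, Metric.mem_closedBall_self (hKpos n).le⟩⟩
    refine ⟨fun i => (TopologicalSpace.denseSeq (K m n) i : G),
      fun i => (TopologicalSpace.denseSeq (K m n) i).2, ?_⟩
    intro g hg ε hε
    obtain ⟨i, hi⟩ :=
      (TopologicalSpace.denseRange_denseSeq (K m n)).exists_dist_lt (⟨g, hg⟩ : K m n) hε
    exact ⟨i, by simpa [Subtype.dist_eq] using hi⟩
  choose e heK hedense using hsep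
  -- the measurable sets Q m n
  set Q : ℕ → ℕ → Set X := fun m n => ⋂ j : ℕ, ⋃ i : ℕ, ⋂ k : ℕ, ⋂ _ : k ≤ j,
      {ξ : X | ‖φ ξ (γ (e m n i) (A k)) - φ ξ (A k)‖ < 1 / ((j : ℝ) + 1)} with hQdef
  have hQmeas : ∀ m n, MeasurableSet (Q m n) := by
    intro m n
    refine MeasurableSet.iInter fun j => MeasurableSet.iUnion fun i =>
      MeasurableSet.iInter fun k => MeasurableSet.iInter fun _ => ?_
    exact measurableSet_lt (((hφ.2 _).sub (hφ.2 _)).norm) measurable_const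
  have hQmem : ∀ m n ξ, ξ ∈ Q m n ↔ ∀ j : ℕ, ∃ i : ℕ, ∀ k ≤ j,
      ‖φ ξ (γ (e m n i) (A k)) - φ ξ (A k)‖ < 1 / ((j : ℝ) + 1) := by
    intro m n ξ
    simp [hQdef, Set.mem_iInter, Set.mem_iUnion]
  -- characterization of Q
  have hQchar : ∀ m n ξ, ξ ∈ Q m n ↔ ∃ g ∈ K m n, g ∈ Stab ξ := by
    intro m n ξ
    rw [hQmem]
    constructor
    · intro h
      choose i hi using h
      set f : ℕ → G := fun j => e m n (i j) with hfdef
      have hfK : ∀ j, f j ∈ K m n := fun j => heK m n (i j)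
      obtain ⟨a, haK, σ, hσmono, hσtend⟩ := (hKcompact m n).tendsto_subseq hfK
      refine ⟨a, haK, hStabDense ξ a ?_⟩
      intro k
      have h1 : Tendsto (fun j => φ ξ (γ (f (σ j)) (A k))) atTop (𝓝 (φ ξ (γ a (A k)))) :=
        ((contEval ξ (A k)).tendsto a).comp hσtend
      have h2 : Tendsto (fun j => ‖φ ξ (γ (f (σ j)) (A k)) - φ ξ (A k)‖) atTop
          (𝓝 ‖φ ξ (γ a (A k)) - φ ξ (A k)‖) := (h1.sub tendsto_const_nhds).norm
      have h3 : Tendsto (fun j : ℕ => 1 / ((j : ℝ) + 1)) atTop (𝓝 0) :=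
        tendsto_one_div_add_atTop_nhds_zero_nat
      have key : ‖φ ξ (γ a (A k)) - φ ξ (A k)‖ ≤ 0 := by
        refine le_of_tendsto_of_tendsto h2 h3 ?_
        filter_upwards [Filter.eventually_ge_atTop k] with j hj
        have hk : k ≤ σ j := hj.trans (hσmono.le_apply)
        have hlt := hi (σ j) k hk
        have hle : 1 / ((σ j : ℝ) + 1) ≤ 1 / ((j : ℝ) + 1) := by
          apply one_div_le_one_div_of_le (by positivity)
          have : (j : ℝ) ≤ (σ j : ℝ) := by exact_mod_cast hσmono.le_apply
          linarith
        exact (hlt.le.trans hle)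
      have : ‖φ ξ (γ a (A k)) - φ ξ (A k)‖ = 0 := le_antisymm key (norm_nonneg _)
      exact sub_eq_zero.mp (norm_eq_zero.mp this)
    · rintro ⟨g, hgK, hgS⟩ j
      set U : Set G := ⋂ k ∈ Finset.range (j + 1),
        {g' : G | ‖φ ξ (γ g' (A k)) - φ ξ (A k)‖ < 1 / ((j : ℝ) + 1)} with hUdef
      have hUopen : IsOpen U := by
        apply isOpen_biInter_finset
        intro k _
        exact isOpen_lt (((contEval ξ (A k)).sub continuous_const).norm) continuous_const
      have hgU : g ∈ U := by
        refine Set.mem_biInter fun k _ => ?_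
        simp only [Set.mem_setOf_eq, hgS (A k), sub_self, norm_zero]
        positivity
      obtain ⟨ε, hε, hball⟩ := Metric.isOpen_iff.mp hUopen g hgU
      obtain ⟨i, hi⟩ := hedense m n g hgK ε hε
      have heiU : e m n i ∈ U := hball (by rwa [Metric.mem_ball, dist_comm])
      refine ⟨i, fun k hk => ?_⟩
      exact Set.mem_iInter₂.mp heiU k (Finset.mem_range_succ_iff.mpr hk)
  -- cancellation for α
  have hαcancel : ∀ (y : Fin d → ℤ) (B : F), α (-y) (α y B) = B := by
    intro y B
    rw [← hαadd, neg_add_cancel, hα0]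
  -- invariance of the stabilizer along the orbit, for equivariant points
  have hStabT : ∀ ξ : X, (∀ (x : Fin d → ℤ) (B : F), φ ξ (α x B) = φ (T (-x) ξ) B) →
      ∀ y : Fin d → ℤ, Stab (T y ξ) = Stab ξ := by
    intro ξ hP y
    have hP' : ∀ B : F, φ ξ (α (-y) B) = φ (T y ξ) B := by
      intro B
      have := hP (-y) B
      rwa [neg_neg] at this
    ext g
    constructor
    · intro hg B
      calc φ ξ (γ g B) = φ ξ (α (-y) (α y (γ g B))) := by rw [hαcancel]
        _ = φ (T y ξ) (α y (γ g B)) := hP' _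
        _ = φ (T y ξ) (γ g (α y B)) := by rw [hγα]
        _ = φ (T y ξ) (α y B) := hg (α y B)
        _ = φ ξ (α (-y) (α y B)) := (hP' _).symm
        _ = φ ξ B := by rw [hαcancel]
    · intro hg B
      calc φ (T y ξ) (γ g B) = φ ξ (α (-y) (γ g B)) := (hP' _).symm
        _ = φ ξ (γ g (α (-y) B)) := by rw [hγα]
        _ = φ ξ (α (-y) B) := hg (α (-y) B)
        _ = φ (T y ξ) B := hP' _
  -- the null set of non-equivariant points
  set N : Set X := {ξ : X | ¬ ∀ (x : Fin d → ℤ) (B : F), φ ξ (α x B) = φ (T (-x) ξ) B}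
    with hNdef
  have hN : ν N = 0 := by
    have := hequiv
    rw [Equivariant, ae_iff] at this
    exact this
  -- zero-one law for the Q m n
  have hQ01 : ∀ m n, ν (Q m n) = 0 ∨ ν (Q m n) = 1 := by
    intro m n
    set S₀ : Set X := ⋂ y : Fin d → ℤ, T y ⁻¹' Q m n with hS₀def
    have hS₀meas : MeasurableSet S₀ :=
      MeasurableSet.iInter fun y => (hT.1 y).measurable (hQmeas m n)
    have hS₀sub : S₀ ⊆ Q m n := by
      intro ξ hξ
      have := Set.mem_iInter.mp hξ 0
      rwa [hT.2.1] at this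
    have hdiff : Q m n \ S₀ ⊆ N := by
      intro ξ ⟨hξQ, hξS⟩
      by_contra hξN
      apply hξS
      have hP : ∀ (x : Fin d → ℤ) (B : F), φ ξ (α x B) = φ (T (-x) ξ) B := by
        by_contra h; exact hξN h
      refine Set.mem_iInter.mpr fun y => ?_
      show T y ξ ∈ Q m n
      rw [hQchar]
      rw [hQchar] at hξQ
      rwa [hStabT ξ hP y]
    have hνdiff : ν (Q m n \ S₀) = 0 := measure_mono_null hdiff hN
    have hνeq : ν S₀ = ν (Q m n) := by
      refine le_antisymm (measure_mono hS₀sub) ?_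
      calc ν (Q m n) ≤ ν (S₀ ∪ (Q m n \ S₀)) := by
              refine measure_mono fun ξ hξ => ?_
              by_cases h : ξ ∈ S₀
              · exact Or.inl h
              · exact Or.inr ⟨hξ, h⟩
        _ ≤ ν S₀ + ν (Q m n \ S₀) := measure_union_le _ _
        _ = ν S₀ := by rw [hνdiff, add_zero]
    have hinv : ∀ x, T x ⁻¹' S₀ = S₀ := by
      intro x
      have hcomp : ∀ y : Fin d → ℤ, T x ⁻¹' (T y ⁻¹' Q m n) = T (y + x) ⁻¹' Q m n := by
        intro y
        rw [hT.2.2.1 y x]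
        rfl
      rw [hS₀def, Set.preimage_iInter]
      ext ξ
      simp only [Set.mem_iInter]
      constructor
      · intro h z
        have := h (z - x)
        rw [hcomp (z - x), sub_add_cancel] at this
        exact this
      · intro h y
        rw [hcomp y]
        exact h (y + x)
    have := hT.2.2.2 S₀ hS₀meas hinv
    rwa [hνeq] at this
  -- the full measure set F₁
  set R : ℕ × ℕ → Set X := fun p =>
    if ν (Q p.1 p.2) = 1 then Q p.1 p.2 else (Q p.1 p.2)ᶜ with hRdef
  have hRmeas : ∀ p, MeasurableSet (R p) := by
    intro p
    by_cases h : ν (Q p.1 p.2) = 1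
    · simp only [hRdef, if_pos h]
      exact hQmeas p.1 p.2
    · simp only [hRdef, if_neg h]
      exact (hQmeas p.1 p.2).compl
  have hR1 : ∀ p, ν (R p) = 1 := by
    intro p
    by_cases h : ν (Q p.1 p.2) = 1
    · simp only [hRdef, if_pos h]
      exact h
    · simp only [hRdef, if_neg h]
      have h0 : ν (Q p.1 p.2) = 0 := (hQ01 p.1 p.2).resolve_right h
      rwa [prob_compl_eq_one_iff (hQmeas p.1 p.2)]
  set F₁ : Set X := ⋂ p : ℕ × ℕ, R p with hF₁def
  have hF₁meas : MeasurableSet F₁ := MeasurableSet.iInter hRmeas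
  have hF₁1 : ν F₁ = 1 := by
    rw [← prob_compl_eq_zero_iff hF₁meas, hF₁def, Set.compl_iInter]
    exact measure_iUnion_null fun p => (prob_compl_eq_zero_iff (hRmeas p)).mpr (hR1 p)
  -- the stabilizer is constant on F₁
  have hMain : ∀ ξ ∈ F₁, ∀ ξ' ∈ F₁, Stab ξ ⊆ Stab ξ' := by
    intro ξ hξ ξ' hξ' g hg
    have hcl : g ∈ closure (Stab ξ') := by
      rw [Metric.mem_closure_iff]
      intro ε hε
      obtain ⟨n, hn⟩ := exists_nat_one_div_lt (half_pos hε)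
      obtain ⟨m, hm⟩ := hu.exists_dist_lt g (hKpos n)
      have hgK : g ∈ K m n := Metric.mem_closedBall.mpr hm.le
      have hξQ : ξ ∈ Q m n := (hQchar m n ξ).mpr ⟨g, hgK, hg⟩
      have hQ1 : ν (Q m n) = 1 := by
        by_contra h
        have hR : ξ ∈ R (m, n) := Set.mem_iInter.mp hξ (m, n)
        simp only [hRdef, if_neg h] at hR
        exact hR hξQ
      have hξ'Q : ξ' ∈ Q m n := by
        have hR : ξ' ∈ R (m, n) := Set.mem_iInter.mp hξ' (m, n)
        simpa only [hRdef, if_pos hQ1] using hR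
      obtain ⟨g', hg'K, hg'S⟩ := (hQchar m n ξ').mp hξ'Q
      refine ⟨g', hg'S, ?_⟩
      have hd1 : dist g (u m) < 1 / ((n : ℝ) + 1) := hm
      have hd2 : dist (u m) g' ≤ 1 / ((n : ℝ) + 1) := by
        rw [dist_comm]
        exact Metric.mem_closedBall.mp hg'K
      calc dist g g' ≤ dist g (u m) + dist (u m) g' := dist_triangle _ _ _
        _ < 1 / ((n : ℝ) + 1) + 1 / ((n : ℝ) + 1) := by linarith
        _ < ε / 2 + ε / 2 := by linarith
        _ = ε := by ring
    rwa [(hStabClosed ξ').closure_eq] at hcl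
  -- conclusion
  have hF₁ne : F₁.Nonempty := by
    rcases Set.eq_empty_or_nonempty F₁ with h | h
    · rw [h, measure_empty] at hF₁1
      exact absurd hF₁1 (by simp)
    · exact h
  obtain ⟨ξ₀, hξ₀⟩ := hF₁ne
  have hsub : ∀ {a b : G}, a ∈ Stab ξ₀ → b ∈ Stab ξ₀ → a * b ∈ Stab ξ₀ := by
    intro a b ha hb B
    rw [hγmul, ha, hb]
  refine ⟨{ carrier := Stab ξ₀
            one_mem' := fun B => by rw [hγ1]
            mul_mem' := fun ha hb => hsub ha hb
            inv_mem' := by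
              intro a ha B
              have := ha (γ a⁻¹ B)
              rw [← hγmul, mul_inv_cancel, hγ1] at this
              exact this.symm }, ?_, F₁, hF₁meas, hF₁1, ?_⟩
  · exact hStabClosed ξ₀
  · intro ξ hξ
    exact Set.Subset.antisymm (hMain ξ hξ ξ₀ hξ₀) (hMain ξ₀ hξ₀ ξ hξ)
end

section
/- Let {φ_ξ}_{ξ∈X} be an equivariant measurable field of states on F. Then there exists a ν-measurable set F₀ ⊆ X of full measure such that for every ξ ∈ F₀ the stabilizer of the field, G_φ := {g ∈ G : for every A ∈ F, φ_ξ(γ_g(A)) = φ_ξ(A) for ν-a.e. ξ}, is contained in the stabilizer G_{φ_ξ} := {g ∈ G : φ_ξ ∘ γ_g = φ_ξ} of the individual state φ_ξ. -/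
open Filter MeasureTheory Topology
open scoped ComplexOrder

/-- For an equivariant measurable field of states `{φ_ξ}`, there is a
full-measure measurable set `F₀` such that for every `ξ ∈ F₀` the stabilizer `G_φ` of the
field is contained in the stabilizer `G_{φ_ξ}` of the individual state. -/
theorem statement11 {d : ℕ} (hd : 1 ≤ d)
    {X : Type*} [TopologicalSpace X] [CompactSpace X] [TopologicalSpace.MetrizableSpace X]
    [MeasurableSpace X] [BorelSpace X]
    (ν : Measure X) [IsProbabilityMeasure ν]
    {F : Type*} [NormedRing F] [StarRing F] [CStarRing F] [NormedAlgebra ℂ F]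
    [StarModule ℂ F] [CompleteSpace F] [TopologicalSpace.SeparableSpace F]
    (T : (Fin d → ℤ) → X → X) (hT : ErgodicAction ν T)
    (α : (Fin d → ℤ) → F ≃⋆ₐ[ℂ] F)
    (hα0 : ∀ A, α 0 A = A) (hαadd : ∀ x y A, α (x + y) A = α x (α y A))
    {G : Type*} [Group G] [TopologicalSpace G] [IsTopologicalGroup G] [CompactSpace G]
    [TopologicalSpace.MetrizableSpace G]
    (γ : G → F ≃⋆ₐ[ℂ] F)
    (hγ1 : ∀ A, γ 1 A = A) (hγmul : ∀ g h A, γ (g * h) A = γ g (γ h A))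
    (hγcont : Continuous fun p : G × F => γ p.1 p.2)
    (hγα : ∀ g x A, γ g (α x A) = α x (γ g A))
    (φ : X → F →L[ℂ] ℂ) (hφ : IsStateField φ)
    (hequiv : Equivariant ν T (fun x A => α x A) φ)
    (Gφ : Set G)
    (hGφ : Gφ = {g : G | ∀ A : F, ∀ᵐ ξ ∂ν, φ ξ (γ g A) = φ ξ A}) :
    ∃ F₀ : Set X, MeasurableSet F₀ ∧ ν F₀ = 1 ∧
      ∀ ξ ∈ F₀, Gφ ⊆ {g : G | ∀ A : F, φ ξ (γ g A) = φ ξ A} := by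
  classical
  obtain ⟨Q, hQc, hQd⟩ := TopologicalSpace.exists_countable_dense F
  letI : MetricSpace G := TopologicalSpace.metrizableSpaceMetric G
  obtain ⟨D, hDc, hDd⟩ := TopologicalSpace.exists_countable_dense (↥Gφ)
  set D' : Set G := Subtype.val '' D with hD'
  have hD'c : D'.Countable := hDc.image _
  have hD'sub : D' ⊆ Gφ := by rintro _ ⟨⟨g, hg⟩, _, rfl⟩; exact hg
  have hGcl : Gφ ⊆ closure D' := by
    intro g hg
    have h1 : (⟨g, hg⟩ : ↥Gφ) ∈ closure D := by
      rw [hDd.closure_eq]; exact Set.mem_univ _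
    exact map_mem_closure continuous_subtype_val h1
      (fun x hx => Set.mem_image_of_mem _ hx)
  set S : G → F → Set X := fun g A => {ξ | φ ξ (γ g A) = φ ξ A} with hS
  have hmeas : ∀ g A, MeasurableSet (S g A) := by
    intro g A
    have h1 := hφ.2 (γ g A)
    have h2 := hφ.2 A
    have heq : S g A = (fun ξ => φ ξ (γ g A) - φ ξ A) ⁻¹' {0} := by
      ext ξ; simp [hS, sub_eq_zero]
    rw [heq]
    exact (h1.sub h2) (measurableSet_singleton 0)
  have hnull : ∀ g ∈ D', ∀ A, ν (S g A)ᶜ = 0 := by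
    intro g hg A
    have hgφ : g ∈ Gφ := hD'sub hg
    rw [hGφ] at hgφ
    have := hgφ A
    rw [ae_iff] at this
    simpa [hS, Set.compl_setOf] using this
  refine ⟨⋂ g ∈ D', ⋂ A ∈ Q, S g A, ?_, ?_, ?_⟩
  · exact MeasurableSet.biInter hD'c fun g _ =>
      MeasurableSet.biInter hQc fun A _ => hmeas g A
  · have hcompl : ν (⋂ g ∈ D', ⋂ A ∈ Q, S g A)ᶜ = 0 := by
      rw [Set.compl_iInter₂]
      refine (measure_biUnion_null_iff hD'c).2 fun g hg => ?_
      rw [Set.compl_iInter₂]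
      exact (measure_biUnion_null_iff hQc).2 fun A _ => hnull g hg A
    have hm : MeasurableSet (⋂ g ∈ D', ⋂ A ∈ Q, S g A) :=
      MeasurableSet.biInter hD'c fun g _ =>
        MeasurableSet.biInter hQc fun A _ => hmeas g A
    rwa [prob_compl_eq_zero_iff hm] at hcompl
  · intro ξ hξ g hg A
    have key : ∀ B ∈ Q, φ ξ (γ g B) = φ ξ B := by
      intro B hB
      have hcl : IsClosed {g' : G | φ ξ (γ g' B) = φ ξ B} := by
        have hc : Continuous fun g' : G => φ ξ (γ g' B) :=
          (φ ξ).continuous.comp (hγcont.comp (continuous_id.prodMk continuous_const))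
        exact isClosed_eq hc continuous_const
      have hsub : D' ⊆ {g' : G | φ ξ (γ g' B) = φ ξ B} := by
        intro g' hg'
        have := Set.mem_iInter₂.1 hξ g' hg'
        exact Set.mem_iInter₂.1 this B hB
      exact (hcl.closure_subset_iff.2 hsub) (hGcl hg)
    have hclF : IsClosed {A : F | φ ξ (γ g A) = φ ξ A} := by
      have hc1 : Continuous fun A : F => φ ξ (γ g A) :=
        (φ ξ).continuous.comp (hγcont.comp (continuous_const.prodMk continuous_id))
      exact isClosed_eq hc1 (φ ξ).continuous
    have hall : Set.univ ⊆ {A : F | φ ξ (γ g A) = φ ξ A} := by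
      rw [← hQd.closure_eq]
      exact hclF.closure_subset_iff.2 key
    exact hall (Set.mem_univ A)
end

section
/- Let {φ_ξ}_{ξ∈X} be an equivariant measurable field of states on F. Then there exists a ν-measurable set F ⊆ X of full measure such that for every ξ ∈ F the stabilizer G_{φ_ξ} := {g ∈ G : φ_ξ ∘ γ_g = φ_ξ} of the individual state equals the stabilizer of the field, G_φ := {g ∈ G : for every A ∈ F, φ_ξ(γ_g(A)) = φ_ξ(A) for ν-a.e. ξ}. -/
open Filter MeasureTheory Topology
open scoped ComplexOrder

/-- For an equivariant measurable field of states `{φ_ξ}`, there is a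
full-measure measurable set `F₀` such that for every `ξ ∈ F₀` the stabilizer `G_{φ_ξ}` of
the individual state equals the stabilizer `G_φ` of the field. -/
theorem statement12 {d : ℕ} (hd : 1 ≤ d)
    {X : Type*} [TopologicalSpace X] [CompactSpace X] [TopologicalSpace.MetrizableSpace X]
    [MeasurableSpace X] [BorelSpace X]
    (ν : Measure X) [IsProbabilityMeasure ν]
    {F : Type*} [NormedRing F] [StarRing F] [CStarRing F] [NormedAlgebra ℂ F]
    [StarModule ℂ F] [CompleteSpace F] [TopologicalSpace.SeparableSpace F]
    (T : (Fin d → ℤ) → X → X) (hT : ErgodicAction ν T)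
    (α : (Fin d → ℤ) → F ≃⋆ₐ[ℂ] F)
    (hα0 : ∀ A, α 0 A = A) (hαadd : ∀ x y A, α (x + y) A = α x (α y A))
    {G : Type*} [Group G] [TopologicalSpace G] [IsTopologicalGroup G] [CompactSpace G]
    [TopologicalSpace.MetrizableSpace G]
    (γ : G → F ≃⋆ₐ[ℂ] F)
    (hγ1 : ∀ A, γ 1 A = A) (hγmul : ∀ g h A, γ (g * h) A = γ g (γ h A))
    (hγcont : Continuous fun p : G × F => γ p.1 p.2)
    (hγα : ∀ g x A, γ g (α x A) = α x (γ g A))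
    (φ : X → F →L[ℂ] ℂ) (hφ : IsStateField φ)
    (hequiv : Equivariant ν T (fun x A => α x A) φ)
    (Gφ : Set G)
    (hGφ : Gφ = {g : G | ∀ A : F, ∀ᵐ ξ ∂ν, φ ξ (γ g A) = φ ξ A}) :
    ∃ F₀ : Set X, MeasurableSet F₀ ∧ ν F₀ = 1 ∧
      ∀ ξ ∈ F₀, {g : G | ∀ A : F, φ ξ (γ g A) = φ ξ A} = Gφ := by

  classical
  letI : MetricSpace G := TopologicalSpace.metrizableSpaceMetric G
  obtain ⟨hstate, hmeas⟩ := hφ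
  -- dense sequences in F and G
  set A : ℕ → F := TopologicalSpace.denseSeq F with hA
  have hAdense : DenseRange A := TopologicalSpace.denseRange_denseSeq F
  set D : ℕ → G := TopologicalSpace.denseSeq G with hD
  have hDdense : DenseRange D := TopologicalSpace.denseRange_denseSeq G
  -- stabilizer of an individual state
  set Hs : X → Set G := fun ξ => {g | ∀ B : F, φ ξ (γ g B) = φ ξ B} with hHsdef
  have hγBcont : ∀ B : F, Continuous fun g : G => γ g B := fun B =>
    hγcont.comp (continuous_id.prodMk continuous_const)
  have hγgcont : ∀ g : G, Continuous fun B : F => γ g B := fun g =>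
    hγcont.comp (continuous_const.prodMk continuous_id)
  have hHd : ∀ ξ g, (∀ n, φ ξ (γ g (A n)) = φ ξ (A n)) → g ∈ Hs ξ := by
    intro ξ g h
    have hc1 : Continuous fun B : F => φ ξ (γ g B) := (φ ξ).continuous.comp (hγgcont g)
    have := hAdense.equalizer hc1 (φ ξ).continuous (funext h)
    intro B
    exact congrFun this B
  have hHclosed : ∀ ξ, IsClosed (Hs ξ) := by
    intro ξ
    have : Hs ξ = ⋂ B : F, {g | φ ξ (γ g B) = φ ξ B} := by
      ext g; simp only [hHsdef, Set.mem_setOf_eq, Set.mem_iInter]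
    rw [this]
    exact isClosed_iInter fun B =>
      isClosed_eq ((φ ξ).continuous.comp (hγBcont B)) continuous_const
  -- the invariant full-measure set E' where equivariance holds
  set P : X → Prop := fun ξ => ∀ (x : Fin d → ℤ) (B : F), φ ξ (α x B) = φ (T (-x) ξ) B
    with hPdef
  have hPae : ν {ξ | ¬ P ξ} = 0 := by
    have := hequiv
    rw [Equivariant, MeasureTheory.ae_iff] at this
    exact this
  set N : Set X := MeasureTheory.toMeasurable ν {ξ | ¬ P ξ} with hN
  have hNmeas : MeasurableSet N := measurableSet_toMeasurable _ _
  have hNnull : ν N = 0 := by rw [hN, measure_toMeasurable]; exact hPae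
  set E : Set X := Nᶜ with hE
  have hEmeas : MeasurableSet E := hNmeas.compl
  have hEP : ∀ ξ ∈ E, P ξ := fun ξ hξ =>
    not_not.mp fun h => hξ (subset_toMeasurable _ _ h)
  set E' : Set X := ⋂ x : Fin d → ℤ, T x ⁻¹' E with hE'
  have hTmeas : ∀ x, Measurable (T x) := fun x => (hT.1 x).measurable
  have hE'meas : MeasurableSet E' := MeasurableSet.iInter fun x => hTmeas x hEmeas
  have hE'c : ν E'ᶜ = 0 := by
    rw [hE', Set.compl_iInter]
    refine measure_iUnion_null fun x => ?_
    have : (T x ⁻¹' E)ᶜ = T x ⁻¹' N := by rw [hE, Set.preimage_compl, compl_compl]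
    rw [this, (hT.1 x).measure_preimage hNmeas.nullMeasurableSet]
    exact hNnull
  have hE'ν : ν E' = 1 := (prob_compl_eq_zero_iff hE'meas).mp hE'c
  have hE'inv : ∀ y, T y ⁻¹' E' = E' := by
    intro y
    ext ξ
    simp only [hE', Set.mem_preimage, Set.mem_iInter]
    constructor
    · intro h z
      have := h (z - y)
      rwa [← Function.comp_apply (f := T (z - y)) (g := T y), ← hT.2.2.1,
        sub_add_cancel] at this
    · intro h x
      have := h (x + y)
      rwa [hT.2.2.1, Function.comp_apply] at this
  have hE'E : E' ⊆ E := by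
    intro ξ h
    have := Set.mem_iInter.mp h 0
    rwa [Set.mem_preimage, hT.2.1, id_eq] at this
  have hE'T : ∀ (x) (ξ), ξ ∈ E' → T x ξ ∈ E' := by
    intro x ξ h
    rw [← hE'inv x] at h
    exact h
  have hαinv : ∀ (x) (C : F), α (-x) (α x C) = C := fun x C => by
    rw [← hαadd, neg_add_cancel, hα0]
  -- invariance of the stabilizer along the orbit
  have hHinv : ∀ ξ ∈ E', ∀ x, Hs (T x ξ) = Hs ξ := by
    intro ξ hξ x
    have hP : P ξ := hEP ξ (hE'E hξ)
    have key : ∀ B : F, φ (T x ξ) B = φ ξ (α (-x) B) := by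
      intro B
      have h3 := hP (-x) B
      rw [neg_neg] at h3
      exact h3.symm
    ext g
    simp only [hHsdef, Set.mem_setOf_eq]
    constructor
    · intro h B
      have h2 := h (α x B)
      rw [key, key, hγα g x B, hαinv, hαinv] at h2
      exact h2
    · intro h B
      have h2 := h (α (-x) B)
      rw [hγα g (-x) B] at h2
      rw [key, key]
      exact h2
  -- radii
  set r : ℕ → ℝ := fun m => 1 / (m + 1) with hr
  have hrpos : ∀ m, 0 < r m := fun m => by
    rw [hr]; positivity
  have hrmono : ∀ m, r (m + 1) ≤ r m := by
    intro m
    rw [hr]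
    apply one_div_le_one_div_of_le
    · positivity
    · push_cast; linarith
  have hrlt : ∀ ε : ℝ, 0 < ε → ∃ m : ℕ, r m < ε := fun ε hε => exists_nat_one_div_lt hε
  -- the events
  set Cset : ℕ → ℕ → Set X := fun j m =>
    {ξ | ξ ∈ E' ∧ (Hs ξ ∩ Metric.closedBall (D j) (r m)).Nonempty} with hCdef
  -- countable characterization of the nonempty-intersection event
  have hQ : ∀ ξ j m, (Hs ξ ∩ Metric.closedBall (D j) (r m)).Nonempty ↔
      ∀ s : ℕ, ∃ j', dist (D j') (D j) < r m + r s ∧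
        ∀ n < s, ‖φ ξ (γ (D j') (A n)) - φ ξ (A n)‖ < r s := by
    intro ξ j m
    constructor
    · rintro ⟨g, hg, hgb⟩ s
      set U : Set G := Metric.ball (D j) (r m + r s) ∩
        ⋂ n : Fin s, {g' | ‖φ ξ (γ g' (A ↑n)) - φ ξ (A ↑n)‖ < r s} with hU
      have hUopen : IsOpen U := by
        refine Metric.isOpen_ball.inter (isOpen_iInter_of_finite fun n => ?_)
        exact isOpen_lt ((((φ ξ).continuous.comp (hγBcont (A ↑n))).sub
          continuous_const).norm) continuous_const
      have hgU : g ∈ U := by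
        refine ⟨Metric.mem_ball.mpr (lt_of_le_of_lt (Metric.mem_closedBall.mp hgb)
          (lt_add_of_pos_right _ (hrpos s))), Set.mem_iInter.mpr fun n => ?_⟩
        simp only [Set.mem_setOf_eq, hg (A ↑n), sub_self, norm_zero]
        exact hrpos s
      obtain ⟨j', hj'⟩ := hDdense.exists_mem_open hUopen ⟨g, hgU⟩
      refine ⟨j', Metric.mem_ball.mp hj'.1, fun n hn => ?_⟩
      exact Set.mem_iInter.mp hj'.2 ⟨n, hn⟩
    · intro h
      set W : ℕ → Set G := fun s => Metric.closedBall (D j) (r m + r s) ∩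
        ⋂ n : Fin s, {g' | ‖φ ξ (γ g' (A ↑n)) - φ ξ (A ↑n)‖ ≤ r s} with hW
      have hWclosed : ∀ s, IsClosed (W s) := by
        intro s
        refine Metric.isClosed_closedBall.inter (isClosed_iInter fun n => ?_)
        exact isClosed_le ((((φ ξ).continuous.comp (hγBcont (A ↑n))).sub
          continuous_const).norm) continuous_const
      have hWsub : ∀ s, W (s + 1) ⊆ W s := by
        intro s g' hg'
        obtain ⟨h1, h2⟩ := hg'
        refine ⟨Metric.mem_closedBall.mpr (le_trans (Metric.mem_closedBall.mp h1)
          (by linarith [hrmono s])), Set.mem_iInter.mpr fun n => ?_⟩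
        have := Set.mem_iInter.mp h2 ⟨(n : ℕ), Nat.lt_succ_of_lt n.isLt⟩
        exact le_trans this (hrmono s)
      have hWne : ∀ s, (W s).Nonempty := by
        intro s
        obtain ⟨j', hj'1, hj'2⟩ := h s
        refine ⟨D j', Metric.mem_closedBall.mpr hj'1.le, Set.mem_iInter.mpr fun n => ?_⟩
        exact (hj'2 (n : ℕ) n.isLt).le
      have hWcompact : IsCompact (W 0) := (hWclosed 0).isCompact
      obtain ⟨g, hg⟩ := IsCompact.nonempty_iInter_of_sequence_nonempty_isCompact_isClosed
        W hWsub hWne hWcompact hWclosed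
      have hgW : ∀ s, g ∈ W s := fun s => Set.mem_iInter.mp hg s
      have hgball : g ∈ Metric.closedBall (D j) (r m) := by
        refine Metric.mem_closedBall.mpr (le_of_forall_pos_le_add fun ε hε => ?_)
        obtain ⟨s, hs⟩ := hrlt ε hε
        exact le_trans (Metric.mem_closedBall.mp (hgW s).1) (by linarith)
      have hgH : g ∈ Hs ξ := by
        refine hHd ξ g fun n => ?_
        have hnorm : ‖φ ξ (γ g (A n)) - φ ξ (A n)‖ = 0 := by
          refine le_antisymm (le_of_forall_pos_le_add fun ε hε => ?_) (norm_nonneg _)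
          obtain ⟨s₀, hs₀⟩ := hrlt ε hε
          set s := max (n + 1) s₀ with hsdef
          have hrs : r s ≤ r s₀ := by
            have hc : (s₀ : ℝ) ≤ (s : ℝ) := Nat.cast_le.mpr (le_max_right _ _)
            rw [hr]
            exact one_div_le_one_div_of_le (by positivity) (by linarith)
          have hns : n < s := lt_of_lt_of_le (Nat.lt_succ_self n) (le_max_left _ _)
          have := Set.mem_iInter.mp (hgW s).2 ⟨n, hns⟩
          simp only [Set.mem_setOf_eq] at this
          linarith
        rw [sub_eq_zero.mp (norm_eq_zero.mp hnorm)]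
      exact ⟨g, hgH, hgball⟩
  -- measurability of the events
  have hCmeas : ∀ j m, MeasurableSet (Cset j m) := by
    intro j m
    have hrw : Cset j m = E' ∩ ⋂ s : ℕ, ⋃ j' : ℕ,
        ⋃ (_ : dist (D j') (D j) < r m + r s), ⋂ n : ℕ, ⋂ (_ : n < s),
          {ξ | ‖φ ξ (γ (D j') (A n)) - φ ξ (A n)‖ < r s} := by
      ext ξ
      simp only [hCdef, Set.mem_setOf_eq, Set.mem_inter_iff, Set.mem_iInter,
        Set.mem_iUnion, exists_prop]
      exact and_congr_right fun _ => hQ ξ j m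
    rw [hrw]
    refine hE'meas.inter (MeasurableSet.iInter fun s => MeasurableSet.iUnion fun j' =>
      MeasurableSet.iUnion fun _ => MeasurableSet.iInter fun n =>
        MeasurableSet.iInter fun _ => ?_)
    exact measurableSet_lt (((hmeas (γ (D j') (A n))).sub (hmeas (A n))).norm)
      measurable_const
  -- invariance of the events
  have hCinv : ∀ j m x, T x ⁻¹' Cset j m = Cset j m := by
    intro j m x
    ext ξ
    simp only [Set.mem_preimage, hCdef, Set.mem_setOf_eq]
    constructor
    · rintro ⟨h1, h2⟩
      have hξ : ξ ∈ E' := by rw [← hE'inv x]; exact h1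
      rw [hHinv ξ hξ x] at h2
      exact ⟨hξ, h2⟩
    · rintro ⟨h1, h2⟩
      refine ⟨hE'T x ξ h1, ?_⟩
      rw [hHinv ξ h1 x]
      exact h2
  -- ergodic dichotomy
  have hdich : ∀ j m, ν (Cset j m) = 0 ∨ ν (Cset j m) = 1 := fun j m =>
    hT.2.2.2 _ (hCmeas j m) (hCinv j m)
  -- the full-measure set
  set F₀ : Set X := E' ∩ ⋂ j : ℕ, ⋂ m : ℕ,
    (if ν (Cset j m) = 1 then Cset j m else (Cset j m)ᶜ) with hF₀def
  have hF₀meas : MeasurableSet F₀ := by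
    refine hE'meas.inter (MeasurableSet.iInter fun j => MeasurableSet.iInter fun m => ?_)
    split_ifs
    exacts [hCmeas j m, (hCmeas j m).compl]
  have hpiece : ∀ j m, ν (if ν (Cset j m) = 1 then Cset j m else (Cset j m)ᶜ) = 1 := by
    intro j m
    split_ifs with h
    · exact h
    · rcases hdich j m with h0 | h1
      · rw [prob_compl_eq_one_iff (hCmeas j m)]
        exact h0
      · exact absurd h1 h
  have hF₀c : ν F₀ᶜ = 0 := by
    rw [hF₀def, Set.compl_inter]
    refine measure_union_null hE'c ?_
    rw [Set.compl_iInter]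
    refine measure_iUnion_null fun j => ?_
    rw [Set.compl_iInter]
    refine measure_iUnion_null fun m => ?_
    have hm : MeasurableSet (if ν (Cset j m) = 1 then Cset j m else (Cset j m)ᶜ) := by
      split_ifs
      exacts [hCmeas j m, (hCmeas j m).compl]
    rw [prob_compl_eq_zero_iff hm]
    exact hpiece j m
  have hF₀ν : ν F₀ = 1 := (prob_compl_eq_zero_iff hF₀meas).mp hF₀c
  -- transfer lemma: the stabilizer is constant on F₀
  have htrans : ∀ ξ₁ ∈ F₀, ∀ ξ₂ ∈ F₀, Hs ξ₁ ⊆ Hs ξ₂ := by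
    intro ξ₁ hξ₁ ξ₂ hξ₂ g hg
    have hsel : ∀ m : ℕ, ∃ j, dist g (D j) ≤ r m := by
      intro m
      obtain ⟨j, hj⟩ := Metric.denseRange_iff.mp hDdense g (r m) (hrpos m)
      exact ⟨j, hj.le⟩
    choose jm hjm using hsel
    have hmem1 : ∀ m, ξ₁ ∈ Cset (jm m) m := by
      intro m
      exact ⟨hξ₁.1, ⟨g, hg, Metric.mem_closedBall.mpr (hjm m)⟩⟩
    have hν1 : ∀ m, ν (Cset (jm m) m) = 1 := by
      intro m
      by_contra h
      have hmm := Set.mem_iInter.mp (Set.mem_iInter.mp hξ₁.2 (jm m)) m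
      rw [if_neg h] at hmm
      exact hmm (hmem1 m)
    have hmem2 : ∀ m, ξ₂ ∈ Cset (jm m) m := by
      intro m
      have hmm := Set.mem_iInter.mp (Set.mem_iInter.mp hξ₂.2 (jm m)) m
      rwa [if_pos (hν1 m)] at hmm
    have hex : ∀ m, ∃ h', h' ∈ Hs ξ₂ ∧ dist h' g ≤ 2 * r m := by
      intro m
      obtain ⟨h', hh1, hh2⟩ := (hmem2 m).2
      refine ⟨h', hh1, ?_⟩
      calc dist h' g ≤ dist h' (D (jm m)) + dist (D (jm m)) g := dist_triangle _ _ _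
        _ ≤ r m + r m := add_le_add (Metric.mem_closedBall.mp hh2)
            (by rw [dist_comm]; exact hjm m)
        _ = 2 * r m := by ring
    choose hseq hseq1 hseq2 using hex
    have hlim : Filter.Tendsto hseq atTop (nhds g) := by
      rw [tendsto_iff_dist_tendsto_zero]
      refine squeeze_zero (fun m => dist_nonneg) hseq2 ?_
      have h2 : Filter.Tendsto (fun m : ℕ => 2 * r m) atTop (nhds (2 * 0)) := by
        refine Filter.Tendsto.const_mul 2 ?_
        rw [hr]
        exact tendsto_one_div_add_atTop_nhds_zero_nat
      simpa using h2
    exact (hHclosed ξ₂).mem_of_tendsto hlim (Filter.Eventually.of_forall hseq1)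
  -- conclusion
  refine ⟨F₀, hF₀meas, hF₀ν, fun ξ hξ => ?_⟩
  ext g
  simp only [Set.mem_setOf_eq]
  constructor
  · intro hg
    rw [hGφ]
    intro B
    rw [MeasureTheory.ae_iff]
    refine measure_mono_null ?_ hF₀c
    intro ξ' hξ'
    simp only [Set.mem_setOf_eq] at hξ'
    intro hξ'F₀
    exact hξ' (htrans ξ hξ ξ' hξ'F₀ hg B)
  · intro hg
    rw [hGφ] at hg
    have hae : ∀ᵐ ξ' ∂ν, ∀ n, φ ξ' (γ g (A n)) = φ ξ' (A n) :=
      MeasureTheory.ae_all_iff.mpr fun n => hg (A n)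
    have haeF : ∀ᵐ ξ' ∂ν, ξ' ∈ F₀ := by
      rw [MeasureTheory.ae_iff]
      refine measure_mono_null ?_ hF₀c
      intro ξ' h
      exact h
    obtain ⟨ξ₁, hξ₁F, hξ₁⟩ := (haeF.and hae).exists
    exact htrans ξ₁ hξ₁F ξ hξ (hHd ξ₁ g hξ₁)
end
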